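/- Let R be a commutative unital ring, n ≥ 3, and (c₁, c₂, ..., cₙ) a unimodular row over R. If u ∈ R is a unit modulo the ideal c₃R + ... + cₙR, then (c₁, c₂, c₃, ..., cₙ) and (u·c₁, u·c₂, c₃, ..., cₙ) lie in the same orbit under the right action of the elementary subgroup Eₙ(R). -/

import Mathlib

open Matrix Polynomial

/-- The set of elementary matrices (transvections) over a commutative ring. -/
def ElemSet (ι R : Type) [Fintype ι] [DecidableEq ι] [CommRing R] :
    Set (Matrix ι ι R) :=
  { M | ∃ i j : ι, ∃ a : R, i ≠ j ∧ M = Matrix.transvection i j a }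

/-- The elementary subgroup `E_n(R)`, as the multiplicative closure of the
elementary matrices (it is closed under inverses, hence a group). -/
def Elem (ι R : Type) [Fintype ι] [DecidableEq ι] [CommRing R] :
    Submonoid (Matrix ι ι R) :=
  Submonoid.closure (ElemSet ι R)

/-- A row is unimodular if its entries generate the unit ideal. -/
def IsUnimodular {ι R : Type} [CommRing R] (v : ι → R) : Prop :=
  Ideal.span (Set.range v) = ⊤

/-- Two rows are equivalent under the elementary group if one is obtained from
the other by right multiplication by an element of `E_n(R)`. -/
def RowEquivE {ι R : Type} [Fintype ι] [DecidableEq ι] [CommRing R]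
    (v w : ι → R) : Prop :=
  ∃ E ∈ Elem ι R, Matrix.vecMul v E = w

section Helpers
variable {ι R : Type} [Fintype ι] [DecidableEq ι] [CommRing R]

lemma vecMul_transvection (x : ι → R) (i j : ι) (c : R) :
    Matrix.vecMul x (Matrix.transvection i j c) = Function.update x j (x j + x i * c) := by
  funext k
  simp only [Matrix.transvection, Matrix.vecMul_add, Matrix.vecMul_one, Pi.add_apply]
  have h : Matrix.vecMul x (Matrix.single i j c) k = if j = k then x i * c else 0 := by
    simp only [Matrix.vecMul, dotProduct, Matrix.single, Matrix.of_apply]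
    rw [Finset.sum_eq_single i]
    · by_cases hkj : j = k <;> simp [hkj]
    · intro l _ hl
      simp [Ne.symm hl]
    · simp
  rw [h, Function.update_apply]
  by_cases hkj : k = j
  · simp [hkj]
  · rw [if_neg hkj, if_neg (fun h : j = k => hkj h.symm), add_zero]

lemma step_mem (i j : ι) (c : R) (hij : i ≠ j) :
    Matrix.transvection i j c ∈ Elem ι R :=
  Submonoid.subset_closure ⟨i, j, c, hij, rfl⟩

lemma move {i0 i1 i2 : ι} (h01 : i0 ≠ i1) (h02 : i0 ≠ i2) (h12 : i1 ≠ i2)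
    (x y : ι → R) (p₁ p₂ q₁ q₂ : R) (hpq : q₁ * p₁ + q₂ * p₂ = 0)
    (hy0 : y i0 = x i0 + (x i0 * p₁ + x i1 * p₂) * q₁)
    (hy1 : y i1 = x i1 + (x i0 * p₁ + x i1 * p₂) * q₂)
    (hyk : ∀ k, k ≠ i0 → k ≠ i1 → y k = x k) :
    RowEquivE x y := by
  refine ⟨Matrix.transvection i0 i2 p₁ * (Matrix.transvection i1 i2 p₂ *
      (Matrix.transvection i2 i0 q₁ * (Matrix.transvection i2 i1 q₂ *
      (Matrix.transvection i0 i2 (-p₁) * (Matrix.transvection i1 i2 (-p₂) *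
      (Matrix.transvection i2 i0 (-q₁) * Matrix.transvection i2 i1 (-q₂))))))), ?_, ?_⟩
  · exact mul_mem (step_mem _ _ _ h02) (mul_mem (step_mem _ _ _ h12)
      (mul_mem (step_mem _ _ _ h02.symm) (mul_mem (step_mem _ _ _ h12.symm)
      (mul_mem (step_mem _ _ _ h02) (mul_mem (step_mem _ _ _ h12)
      (mul_mem (step_mem _ _ _ h02.symm) (step_mem _ _ _ h12.symm)))))))
  · simp only [← Matrix.vecMul_vecMul, vecMul_transvection]
    funext k
    have e01 : ¬ (i0 = i1) := h01
    have e02 : ¬ (i0 = i2) := h02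
    have e12 : ¬ (i1 = i2) := h12
    have e10 : ¬ (i1 = i0) := fun h => h01 h.symm
    have e20 : ¬ (i2 = i0) := fun h => h02 h.symm
    have e21 : ¬ (i2 = i1) := fun h => h12 h.symm
    rcases eq_or_ne k i0 with hk0 | hk0
    · rw [hk0]
      simp only [Function.update_apply, e01, e02, e10, e20, e21, e12, if_true, if_false,
        eq_self_iff_true, ite_true, ite_false]
      rw [hy0]
      linear_combination (q₁ * (x i2 + (x i0 * p₁ + x i1 * p₂))) * hpq
    rcases eq_or_ne k i1 with hk1 | hk1
    · rw [hk1]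
      simp only [Function.update_apply, e01, e02, e10, e20, e21, e12, if_true, if_false,
        eq_self_iff_true, ite_true, ite_false]
      rw [hy1]
      linear_combination (q₂ * (x i2 + (x i0 * p₁ + x i1 * p₂))) * hpq
    rcases eq_or_ne k i2 with hk2 | hk2
    · rw [hk2]
      simp only [Function.update_apply, e01, e02, e10, e20, e21, e12, if_true, if_false,
        eq_self_iff_true, ite_true, ite_false]
      rw [hyk i2 (Ne.symm h02) (Ne.symm h12)]
      linear_combination (-(x i2 + (x i0 * p₁ + x i1 * p₂))) * hpq
    · simp only [Function.update_apply, if_neg hk0, if_neg hk1, if_neg hk2]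
      exact (hyk k hk0 hk1).symm

end Helpers

section Helpers2
variable {ι R : Type} [Fintype ι] [DecidableEq ι] [CommRing R]

lemma equiv_refl' (v : ι → R) : RowEquivE v v :=
  ⟨1, one_mem _, Matrix.vecMul_one v⟩

lemma equiv_trans' {v w x : ι → R} (h1 : RowEquivE v w) (h2 : RowEquivE w x) :
    RowEquivE v x := by
  obtain ⟨E1, hE1, he1⟩ := h1
  obtain ⟨E2, hE2, he2⟩ := h2
  exact ⟨E1 * E2, mul_mem hE1 hE2, by rw [← Matrix.vecMul_vecMul, he1, he2]⟩

lemma single_step (x : ι → R) {i j : ι} (hij : i ≠ j) (c : R) :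
    RowEquivE x (Function.update x j (x j + x i * c)) :=
  ⟨Matrix.transvection i j c, step_mem i j c hij, vecMul_transvection x i j c⟩

lemma translate_sum (i0 : ι) (x : ι → R) (c : ι → R) :
    ∀ (F : Finset ι), i0 ∉ F →
      RowEquivE x (Function.update x i0 (x i0 + ∑ j ∈ F, c j * x j)) := by
  classical
  intro F
  induction F using Finset.induction_on with
  | empty =>
    intro _
    simpa using equiv_refl' x
  | @insert j F hjF ih =>
    intro hi0
    have hji0 : j ≠ i0 := fun h => hi0 (h ▸ Finset.mem_insert_self j F)
    have hi0F : i0 ∉ F := fun h => hi0 (Finset.mem_insert_of_mem h)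
    refine equiv_trans' (ih hi0F) ?_
    have h2 := single_step (Function.update x i0 (x i0 + ∑ j ∈ F, c j * x j)) hji0 (c j)
    convert h2 using 1
    funext k
    rcases eq_or_ne k i0 with hk | hk
    · rw [hk]
      simp only [Function.update_apply, if_pos rfl, if_neg hji0, eq_self_iff_true,
        ite_true, ite_false]
      rw [Finset.sum_insert hjF]
      ring
    · simp [Function.update_of_ne hk]

lemma translateJ (i0 : ι) (S : Set ι) (hS : i0 ∉ S) (x : ι → R) (t : R)
    (ht : t ∈ Ideal.span (x '' S)) :
    RowEquivE x (Function.update x i0 (x i0 + t)) := by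
  classical
  rw [Set.image_eq_range] at ht
  rw [Finsupp.mem_ideal_span_range_iff_exists_finsupp] at ht
  obtain ⟨c, hc⟩ := ht
  set F : Finset ι := c.support.image (fun σ : ↥S => (σ : ι)) with hF
  have hi0F : i0 ∉ F := by
    intro h
    rw [hF, Finset.mem_image] at h
    obtain ⟨σ, _, hσ⟩ := h
    exact hS (hσ ▸ σ.2)
  have key := translate_sum i0 x (fun j => if h : j ∈ S then c ⟨j, h⟩ else 0) F hi0F
  have : ∑ j ∈ F, (if h : j ∈ S then c ⟨j, h⟩ else 0) * x j = t := by
    rw [hF, Finset.sum_image (by intro a _ b _ h; exact Subtype.ext h)]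
    rw [← hc, Finsupp.sum]
    apply Finset.sum_congr rfl
    intro σ _
    rw [dif_pos σ.2]
  rwa [this] at key

end Helpers2

theorem stmt_0 {R : Type} [CommRing R] (n : ℕ) (hn : 3 ≤ n)
    (v : Fin n → R) (hv : IsUnimodular v) (u : R)
    (hu : IsUnit (Ideal.Quotient.mk (Ideal.span (v '' {i | 2 ≤ i.val})) u)) :
    RowEquivE v (fun i => if i.val ≤ 1 then u * v i else v i) := by
  classical
  set J : Ideal R := Ideal.span (v '' {i | 2 ≤ i.val}) with hJdef
  have h0 : 0 < n := by omega
  have h1n : 1 < n := by omega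
  have h2n : 2 < n := by omega
  set i0 : Fin n := ⟨0, h0⟩ with hi0
  set i1 : Fin n := ⟨1, h1n⟩ with hi1
  set i2 : Fin n := ⟨2, h2n⟩ with hi2
  have hv0 : i0.val = 0 := rfl
  have hv1 : i1.val = 1 := rfl
  have hv2 : i2.val = 2 := rfl
  have h01 : i0 ≠ i1 := Fin.ne_of_val_ne (by omega)
  have h02 : i0 ≠ i2 := Fin.ne_of_val_ne (by omega)
  have h12 : i1 ≠ i2 := Fin.ne_of_val_ne (by omega)
  -- unimodularity certificate
  have hvtop : (1 : R) ∈ Ideal.span (Set.range v) := by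
    rw [hv]; trivial
  rw [Ideal.mem_span_range_iff_exists_fun] at hvtop
  obtain ⟨f, hf⟩ := hvtop
  -- names
  set a : R := v i0 with ha
  set b : R := v i1 with hb
  set r : R := f i0 with hr
  set s : R := f i1 with hs
  set z : R := 1 - (r * a + s * b) with hzdef
  have hvmem : ∀ i : Fin n, i ≠ i0 → i ≠ i1 → v i ∈ J := by
    intro i hia hib
    refine Ideal.subset_span ⟨i, ?_, rfl⟩
    have hia' : i.val ≠ 0 := fun h => hia (Fin.ext (by omega))
    have hib' : i.val ≠ 1 := fun h => hib (Fin.ext (by omega))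
    simp only [Set.mem_setOf_eq]
    omega
  have hzJ : z ∈ J := by
    have h1 := Finset.sum_sdiff (f := fun i => f i * v i)
      (Finset.subset_univ ({i0, i1} : Finset (Fin n)))
    rw [Finset.sum_pair h01, hf] at h1
    have hz2 : z = ∑ i ∈ Finset.univ \ {i0, i1}, f i * v i := by
      rw [hzdef, hr, hs, ha, hb, ← h1]
      ring
    rw [hz2]
    refine Ideal.sum_mem _ (fun i hi => ?_)
    rw [Finset.mem_sdiff, Finset.mem_insert, Finset.mem_singleton] at hi
    push_neg at hi
    exact Ideal.mul_mem_left _ _ (hvmem i hi.2.1 hi.2.2)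
  -- unit certificate
  obtain ⟨w0, hqJ⟩ : ∃ w0 : R, u * w0 - 1 ∈ J := by
    obtain ⟨ω, hω⟩ := hu
    obtain ⟨w0, hw0⟩ := Ideal.Quotient.mk_surjective (((ω⁻¹ : (R ⧸ J)ˣ) : R ⧸ J))
    refine ⟨w0, ?_⟩
    have hone : Ideal.Quotient.mk J (u * w0) = 1 := by
      rw [_root_.map_mul, hw0, ← hω]
      exact_mod_cast ω.mul_inv
    rw [← Ideal.Quotient.eq_zero_iff_mem, _root_.map_sub, _root_.map_one, hone, sub_self]
  set q : R := u * w0 - 1 with hqdef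
  -- the three moves
  set D1 : R := a * r + b * s with hD1
  set A1 : R := a + D1 * (-s) with hA1d
  set B1 : R := b + D1 * r with hB1d
  set row1 : Fin n → R := fun k => if k = i0 then A1 else if k = i1 then B1 else v k with hrow1
  have m1 : RowEquivE v row1 := by
    refine move h01 h02 h12 v row1 r s (-s) r (by ring) ?_ ?_ ?_
    · simp only [hrow1, if_neg h01, eq_self_iff_true, ite_true, ite_false]; rfl
    · simp only [hrow1, if_neg (Ne.symm h01), eq_self_iff_true, ite_true, ite_false]; rfl
    · intro k hk0 hk1
      simp only [hrow1, if_neg hk0, if_neg hk1]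
  set D2 : R := A1 * (-((u-1) * b)) + B1 * ((u-1) * a) with hD2
  set A2 : R := A1 + D2 * a with hA2d
  set B2 : R := B1 + D2 * b with hB2d
  set row2 : Fin n → R := fun k => if k = i0 then A2 else if k = i1 then B2 else v k with hrow2
  have m2 : RowEquivE row1 row2 := by
    refine move h01 h02 h12 row1 row2 (-((u-1) * b)) ((u-1) * a) a b (by ring) ?_ ?_ ?_
    · simp only [hrow2, hrow1, if_neg h01, if_neg (Ne.symm h01), eq_self_iff_true, ite_true, ite_false]; rfl
    · simp only [hrow2, hrow1, if_neg h01, if_neg (Ne.symm h01), eq_self_iff_true, ite_true, ite_false]; rfl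
    · intro k hk0 hk1
      simp only [hrow2, hrow1, if_neg hk0, if_neg hk1]
  set D3 : R := A2 * (-(w0 * r)) + B2 * (-(w0 * s)) with hD3
  set A3 : R := A2 + D3 * (-s) with hA3d
  set B3 : R := B2 + D3 * r with hB3d
  set row3 : Fin n → R := fun k => if k = i0 then A3 else if k = i1 then B3 else v k with hrow3
  have m3 : RowEquivE row2 row3 := by
    refine move h01 h02 h12 row2 row3 (-(w0 * r)) (-(w0 * s)) (-s) r (by ring) ?_ ?_ ?_
    · simp only [hrow3, hrow2, if_neg h01, if_neg (Ne.symm h01), eq_self_iff_true, ite_true, ite_false]; rfl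
    · simp only [hrow3, hrow2, if_neg h01, if_neg (Ne.symm h01), eq_self_iff_true, ite_true, ite_false]; rfl
    · intro k hk0 hk1
      simp only [hrow3, hrow2, if_neg hk0, if_neg hk1]
  have e3 : RowEquivE v row3 := equiv_trans' (equiv_trans' m1 m2) m3
  -- cleanup amounts
  set Pa : R := -((u-1) * (2-z) * (a + (1-z) * s * w0)) with hPa
  set Qa : R := (1-z) * s with hQa
  set Pb : R := -((u-1) * (2-z) * (b - (1-z) * r * w0)) with hPb
  set Qb : R := -((1-z) * r) with hQb
  have hA3 : A3 = u * a + (z * Pa + q * Qa) := by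
    rw [hA3d, hD3, hA2d, hB2d, hD2, hA1d, hB1d, hD1, hPa, hQa, hzdef, hqdef]
    ring
  have hB3 : B3 = u * b + (z * Pb + q * Qb) := by
    rw [hB3d, hD3, hA2d, hB2d, hD2, hA1d, hB1d, hD1, hPb, hQb, hzdef, hqdef]
    ring
  have hjA : z * Pa + q * Qa ∈ J := add_mem (J.mul_mem_right _ hzJ) (J.mul_mem_right _ hqJ)
  have hjB : z * Pb + q * Qb ∈ J := add_mem (J.mul_mem_right _ hzJ) (J.mul_mem_right _ hqJ)
  -- tail membership preserved
  have hi0S : i0 ∉ {i : Fin n | 2 ≤ i.val} := by simp only [Set.mem_setOf_eq]; omega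
  have hi1S : i1 ∉ {i : Fin n | 2 ≤ i.val} := by simp only [Set.mem_setOf_eq]; omega
  have hne : ∀ i : Fin n, 2 ≤ i.val → i ≠ i0 ∧ i ≠ i1 := by
    intro i hi
    constructor
    · intro h; rw [h] at hi; omega
    · intro h; rw [h] at hi; omega
  have himg3 : row3 '' {i : Fin n | 2 ≤ i.val} = v '' {i | 2 ≤ i.val} := by
    apply Set.image_congr
    intro i hi
    obtain ⟨hia, hib⟩ := hne i hi
    simp only [hrow3, if_neg hia, if_neg hib]
  set row4 : Fin n → R := Function.update row3 i0 (row3 i0 + (-(z * Pa + q * Qa))) with hrow4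
  have t1 : RowEquivE row3 row4 := by
    refine translateJ i0 {i : Fin n | 2 ≤ i.val} hi0S row3 _ ?_
    rw [himg3, ← hJdef]
    exact neg_mem hjA
  have himg4 : row4 '' {i : Fin n | 2 ≤ i.val} = v '' {i | 2 ≤ i.val} := by
    apply Set.image_congr
    intro i hi
    obtain ⟨hia, hib⟩ := hne i hi
    rw [hrow4, Function.update_of_ne hia]
    simp only [hrow3, if_neg hia, if_neg hib]
  set row5 : Fin n → R := Function.update row4 i1 (row4 i1 + (-(z * Pb + q * Qb))) with hrow5
  have t2 : RowEquivE row4 row5 := by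
    refine translateJ i1 {i : Fin n | 2 ≤ i.val} hi1S row4 _ ?_
    rw [himg4, ← hJdef]
    exact neg_mem hjB
  have efin : RowEquivE v row5 := equiv_trans' (equiv_trans' e3 t1) t2
  have hfinal : row5 = fun i => if i.val ≤ 1 then u * v i else v i := by
    funext k
    rcases eq_or_ne k i0 with hk | hk0
    · rw [hk]
      rw [hrow5, Function.update_of_ne h01, hrow4, Function.update_self]
      simp only [hrow3, eq_self_iff_true, ite_true]
      have hle : (i0 : Fin n).val ≤ 1 := by omega
      rw [if_pos hle, hA3, ← ha]
      ring
    rcases eq_or_ne k i1 with hk | hk1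
    · rw [hk]
      rw [hrow5, Function.update_self, hrow4, Function.update_of_ne (Ne.symm h01)]
      simp only [hrow3, if_neg (Ne.symm h01), eq_self_iff_true, ite_true]
      have hle : (i1 : Fin n).val ≤ 1 := by omega
      rw [if_pos hle, hB3, ← hb]
      ring
    · have hk2 : 2 ≤ k.val := by
        have : k.val ≠ 0 := fun h => hk0 (Fin.ext (by simp [hi0, h]))
        have : k.val ≠ 1 := fun h => hk1 (Fin.ext (by simp [hi1, h]))
        omega
      rw [hrow5, Function.update_of_ne hk1, hrow4, Function.update_of_ne hk0]
      simp only [hrow3, if_neg hk0, if_neg hk1]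
      rw [if_neg (by omega)]
  rwa [hfinal] at efin
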